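/- Main correctness theorem: let A be a Wheeler DFA with Wheeler order u_1 < ... < u_n. For each adjacent pair, u_i ≢ u_{i+1} (not in the same class of the minimum-WDFA equivalence) if and only if either λ(u_i) ≠ λ(u_{i+1}), or the border (u_i, u_{i+1}) reaches, in the border graph B(A), some border (u_j, u_{j+1}) with out(u_j) ≠ out(u_{j+1}) or final(u_j) ≠ final(u_{j+1}). -/
import Mathlib


/-- A Wheeler DFA over a linearly ordered state set `Q` (the Wheeler order)
and a linearly ordered alphabet `A`.  The transition function is partial
(`Option`-valued).  The three Wheeler axioms are part of the structure. -/
structure WDFA (Q A : Type) [LinearOrder Q] [LinearOrder A] where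
  delta : Q → A → Option Q
  start : Q
  F : Set Q
  /-- Wheeler axiom (i): the initial state is minimum. -/
  start_le : ∀ u, start ≤ u
  /-- Wheeler axiom (ii). -/
  w2 : ∀ {u v : Q} {a b : A} {u' v' : Q},
      delta u a = some u' → delta v b = some v' → a < b → u' < v'
  /-- Wheeler axiom (iii). -/
  w3 : ∀ {u v : Q} {a : A} {u' v' : Q},
      delta u a = some u' → delta v a = some v' → u < v → u' ≤ v'

namespace WDFA

variable {Q A : Type} [LinearOrder Q] [LinearOrder A]

/-- Extension of the (partial) transition function to strings. -/
def dhat (M : WDFA Q A) : Q → List A → Option Q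
  | q, [] => some q
  | q, a :: w => (M.delta q a).bind (fun p => M.dhat p w)

/-- `q` accepts the string `w`. -/
def Acc (M : WDFA Q A) (q : Q) (w : List A) : Prop :=
  ∃ p, M.dhat q w = some p ∧ p ∈ M.F

/-- Set of labels of outgoing edges of `q`. -/
def out (M : WDFA Q A) (q : Q) : Set A := {a | (M.delta q a).isSome}

/-- Myhill–Nerode state equivalence (with equal domains of definition). -/
def MN (M : WDFA Q A) (u v : Q) : Prop :=
  ∀ w : List A, (M.dhat u w).isSome = (M.dhat v w).isSome ∧ (M.Acc u w ↔ M.Acc v w)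

/-- Myhill–Nerode state equivalence, acceptance-only version
(undefined counts as rejecting). -/
def MNacc (M : WDFA Q A) (u v : Q) : Prop :=
  ∀ w : List A, M.Acc u w ↔ M.Acc v w

/-- `u` and `v` are adjacent in the Wheeler order. -/
def Adj (M : WDFA Q A) (u v : Q) : Prop :=
  u < v ∧ ∀ w : Q, ¬ (u < w ∧ w < v)

/-- `lam` is the incoming-label map: `lam start = ⊥` (the special symbol `#`)
and every transition entering `v` is labelled `lam v`. -/
def HasLam (M : WDFA Q A) (lam : Q → WithBot A) : Prop :=
  lam M.start = ⊥ ∧ ∀ u a v, M.delta u a = some v → lam v = (a : WithBot A)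

/-- Every non-initial state has an incoming transition (reachability). -/
def Reach1 (M : WDFA Q A) : Prop :=
  ∀ u, u ≠ M.start → ∃ p a, M.delta p a = some u

/-- Every state accepts some string (is final or reaches a final state). -/
def Coacc (M : WDFA Q A) : Prop := ∀ u, ∃ w, M.Acc u w

/-- The minimum-WDFA equivalence `≡`: `u` and `v` have the same incoming
label, are Myhill–Nerode equivalent, and so is every state between them in
the Wheeler order. -/
def Equ (M : WDFA Q A) (lam : Q → WithBot A) (u v : Q) : Prop :=
  lam u = lam v ∧ M.MN u v ∧
    ∀ w, min u v ≤ w → w ≤ max u v → lam w = lam u ∧ M.MN w u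

/-- `(u,v)` is a node of the border graph: adjacent states with equal
incoming labels. -/
def IsBorder (M : WDFA Q A) (lam : Q → WithBot A) (u v : Q) : Prop :=
  M.Adj u v ∧ lam u = lam v

/-- Edge relation of the border graph `B(A)`: there is an edge from the
border `x` to the border `y` whenever `x.1 = δ(y.1, λ(x.1))` and
`x.2 = δ(y.2, λ(x.1))`. -/
def EdgeZ (M : WDFA Q A) (lam : Q → WithBot A) : Q × Q → Q × Q → Prop :=
  fun x y => M.IsBorder lam x.1 x.2 ∧ M.IsBorder lam y.1 y.2 ∧
    ∃ a : A, lam x.1 = (a : WithBot A) ∧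
      M.delta y.1 a = some x.1 ∧ M.delta y.2 a = some x.2

/-- Transition function of the quotient automaton `A/st`
(`δ([u],a) = [δ(u,a)]`, implemented via representatives). -/
noncomputable def qdelta (M : WDFA Q A) (st : Setoid Q) (c : Quotient st) (a : A) :
    Option (Quotient st) :=
  (M.delta (Quotient.out c) a).map (Quotient.mk st)

/-- String extension of the quotient transition function. -/
noncomputable def qdhat (M : WDFA Q A) (st : Setoid Q) : Quotient st → List A → Option (Quotient st)
  | c, [] => some c
  | c, a :: w => (M.qdelta st c a).bind (fun d => M.qdhat st d w)

/-- The quotient automaton accepts `w`. -/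
def qAcc (M : WDFA Q A) (st : Setoid Q) (w : List A) : Prop :=
  ∃ c, M.qdhat st (Quotient.mk st M.start) w = some c ∧
    ∃ u ∈ M.F, Quotient.mk st u = c

/-- Order induced on `≡`-classes by the Wheeler order (classes are
intervals, so comparing arbitrary representatives is well defined). -/
def qle (st : Setoid Q) (c d : Quotient st) : Prop :=
  c = d ∨ ∀ u v : Q, Quotient.mk st u = c → Quotient.mk st v = d → u < v

lemma dhat_append (M : WDFA Q A) (u : Q) (w x : List A) :
    M.dhat u (w ++ x) = (M.dhat u w).bind (fun p => M.dhat p x) := by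
  induction w generalizing u with
  | nil => simp [dhat]
  | cons a w ih =>
    simp only [List.cons_append, dhat]
    cases M.delta u a with
    | none => simp
    | some p => simp [ih]

lemma path_dhat (M : WDFA Q A) (lam : Q → WithBot A) {x y : Q × Q}
    (h : Relation.ReflTransGen (M.EdgeZ lam) x y) :
    ∃ w, M.dhat y.1 w = some x.1 ∧ M.dhat y.2 w = some x.2 := by
  induction h with
  | refl => exact ⟨[], rfl, rfl⟩
  | tail _ hbc ih =>
    obtain ⟨w, h1, h2⟩ := ih
    obtain ⟨_, _, a, _, hc1, hc2⟩ := hbc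
    exact ⟨a :: w, by simp [dhat, hc1, h1], by simp [dhat, hc2, h2]⟩

lemma no_acc (M : WDFA Q A) (hco : M.Coacc) {ui ui1 uj uj1 : Q} {w : List A} {a : A}
    (h1 : M.dhat ui w = some uj) (h2 : M.dhat ui1 w = some uj1)
    (ha : (M.delta uj a).isSome) (hb : M.delta uj1 a = none)
    (hm : M.MNacc ui ui1) : False := by
  obtain ⟨p, hp⟩ := Option.isSome_iff_exists.mp ha
  obtain ⟨x, q, hq, hqF⟩ := hco p
  have hAcc : M.Acc ui (w ++ a :: x) :=
    ⟨q, by simp [dhat_append, h1, dhat, hp, hq], hqF⟩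
  obtain ⟨r, hr, _⟩ := (hm _).mp hAcc
  rw [dhat_append, h2] at hr
  simp [dhat, hb] at hr

lemma key (M : WDFA Q A) (lam : Q → WithBot A) (hlam : M.HasLam lam)
    (hreach : M.Reach1) :
    ∀ w : List A, ∀ ui ui1 : Q, M.IsBorder lam ui ui1 →
      ¬ (M.Acc ui w ↔ M.Acc ui1 w) →
      ∃ uj uj1 : Q, M.IsBorder lam uj uj1 ∧
        Relation.ReflTransGen (M.EdgeZ lam) (uj, uj1) (ui, ui1) ∧
        (M.out uj ≠ M.out uj1 ∨ ¬ (uj ∈ M.F ↔ uj1 ∈ M.F)) := by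
  intro w
  induction w with
  | nil =>
    intro ui ui1 hb hne
    exact ⟨ui, ui1, hb, Relation.ReflTransGen.refl,
      Or.inr (by simpa [Acc, dhat] using hne)⟩
  | cons a w ih =>
    intro ui ui1 hb hne
    cases hv : M.delta ui a with
    | none =>
      cases hv1 : M.delta ui1 a with
      | none => exact absurd (by simp [Acc, dhat, hv, hv1]) hne
      | some v1 =>
        refine ⟨ui, ui1, hb, Relation.ReflTransGen.refl, Or.inl ?_⟩
        intro h
        have h1 : a ∈ M.out ui1 := by simp [out, hv1]
        rw [← h] at h1
        simp [out, hv] at h1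
    | some v =>
      cases hv1 : M.delta ui1 a with
      | none =>
        refine ⟨ui, ui1, hb, Relation.ReflTransGen.refl, Or.inl ?_⟩
        intro h
        have h1 : a ∈ M.out ui := by simp [out, hv]
        rw [h] at h1
        simp [out, hv1] at h1
      | some v1 =>
        have hle : v ≤ v1 := M.w3 hv hv1 hb.1.1
        have hne' : ¬ (M.Acc v w ↔ M.Acc v1 w) := by
          have e1 : M.Acc ui (a :: w) ↔ M.Acc v w := by simp [Acc, dhat, hv]
          have e2 : M.Acc ui1 (a :: w) ↔ M.Acc v1 w := by simp [Acc, dhat, hv1]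
          rw [e1, e2] at hne
          exact hne
        rcases eq_or_lt_of_le hle with heq | hlt
        · exact absurd (heq ▸ Iff.rfl) hne'
        · have hlamv : lam v = (a : WithBot A) := hlam.2 _ _ _ hv
          have hlamv1 : lam v1 = (a : WithBot A) := hlam.2 _ _ _ hv1
          have hadjv : M.Adj v v1 := by
            refine ⟨hlt, ?_⟩
            rintro z ⟨h1, h2⟩
            have hzs : z ≠ M.start := ((M.start_le v).trans_lt h1).ne'
            obtain ⟨p, b, hp⟩ := hreach z hzs
            rcases lt_trichotomy b a with hba | hba | hba
            · exact absurd (M.w2 hp hv hba) (asymm h1)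
            · subst hba
              rcases lt_trichotomy p ui with hpu | hpu | hpu
              · exact absurd (M.w3 hp hv hpu) (not_le.mpr h1)
              · subst hpu
                rw [hv] at hp
                exact absurd (Option.some_injective _ hp) h1.ne
              · rcases lt_trichotomy p ui1 with hpu1 | hpu1 | hpu1
                · exact hb.1.2 p ⟨hpu, hpu1⟩
                · subst hpu1
                  rw [hv1] at hp
                  exact absurd (Option.some_injective _ hp) h2.ne'
                · exact absurd (M.w3 hv1 hp hpu1) (not_le.mpr h2)
            · exact absurd (M.w2 hv1 hp hba) (asymm h2)
          have hbv : M.IsBorder lam v v1 := ⟨hadjv, hlamv.trans hlamv1.symm⟩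
          obtain ⟨uj, uj1, hb', hpath, hd⟩ := ih v v1 hbv hne'
          exact ⟨uj, uj1, hb',
            hpath.tail ⟨hbv, hb, a, hlamv, hv, hv1⟩, hd⟩

end WDFA

/-- main correctness theorem: adjacent states `u_i, u_{i+1}`
are in different classes of the minimum-WDFA equivalence `≡` iff either their
incoming labels differ, or the border `(u_i, u_{i+1})` is connected in the
border graph to some border `(u_j, u_{j+1})` with different outgoing label
sets or different finality. -/
theorem wdfa_minimization_correct {Q A : Type} [LinearOrder Q] [LinearOrder A]
    (M : WDFA Q A) (lam : Q → WithBot A) (hlam : M.HasLam lam)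
    (hreach : M.Reach1) (hco : M.Coacc)
    (ui ui1 : Q) (hadj : M.Adj ui ui1) :
    ¬ (lam ui = lam ui1 ∧ M.MNacc ui ui1) ↔
      (lam ui ≠ lam ui1 ∨
        ∃ uj uj1 : Q, M.IsBorder lam uj uj1 ∧
          Relation.ReflTransGen (M.EdgeZ lam) (uj, uj1) (ui, ui1) ∧
          (M.out uj ≠ M.out uj1 ∨ ¬ (uj ∈ M.F ↔ uj1 ∈ M.F))) := by
  constructor
  · intro h
    by_cases hl : lam ui = lam ui1
    · right
      have hm : ¬ M.MNacc ui ui1 := fun hm => h ⟨hl, hm⟩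
      simp only [WDFA.MNacc, not_forall] at hm
      obtain ⟨w, hw⟩ := hm
      exact WDFA.key M lam hlam hreach w ui ui1 ⟨hadj, hl⟩ hw
    · exact Or.inl hl
  · rintro (hl | ⟨uj, uj1, hb, hpath, hd⟩) ⟨hl', hm⟩
    · exact hl hl'
    · obtain ⟨w, h1, h2⟩ := WDFA.path_dhat M lam hpath
      rcases hd with hout | hfin
      · have : ∃ a, ¬ (a ∈ M.out uj ↔ a ∈ M.out uj1) := by
          by_contra hc
          push_neg at hc
          exact hout (Set.ext fun a => hc a)
        obtain ⟨a, ha⟩ := this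
        by_cases haj : a ∈ M.out uj
        · have haj1 : a ∉ M.out uj1 := fun hx => ha ⟨fun _ => hx, fun _ => haj⟩
          have hb1 : M.delta uj1 a = none := by
            simpa [WDFA.out, Option.not_isSome_iff_eq_none] using haj1
          exact WDFA.no_acc M hco h1 h2 haj hb1 hm
        · have haj1 : a ∈ M.out uj1 := by
            by_contra hx
            exact ha ⟨fun hy => absurd hy haj, fun hy => absurd hy hx⟩
          have hb1 : M.delta uj a = none := by
            simpa [WDFA.out, Option.not_isSome_iff_eq_none] using haj
          exact WDFA.no_acc M hco h2 h1 haj1 hb1 (fun w => (hm w).symm)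
      · have e1 : M.Acc ui w ↔ uj ∈ M.F := by simp [WDFA.Acc, h1]
        have e2 : M.Acc ui1 w ↔ uj1 ∈ M.F := by simp [WDFA.Acc, h2]
        exact hfin ((e1.symm.trans (hm w)).trans e2)
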